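/- Let n ≥ 2 and let d be a proper divisor of n (i.e., d divides n and 1 < d < n). Then the set A_d = {x ∈ ℤ_n : gcd(x, n) = d}, where gcd(x, n) is the greatest common divisor of the canonical representative of x in {0, 1, …, n−1} with n, is an independent set of the comaximal graph Γ(ℤ_n) of cardinality φ(n/d). -/

import Mathlib

open Polynomial

/-- The comaximal graph of `ℤ/nℤ`: distinct `a, b` are adjacent iff the ideal
generated by `a` and `b` is the whole ring. -/
def comaximalGraph (n : ℕ) : SimpleGraph (ZMod n) where
  Adj a b := a ≠ b ∧ Ideal.span ({a, b} : Set (ZMod n)) = ⊤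
  symm := by
    constructor
    rintro a b ⟨hab, h⟩
    refine ⟨hab.symm, ?_⟩
    rwa [Set.pair_comm]
  loopless := by
    constructor
    rintro a ⟨h, -⟩
    exact h rfl

/-- `S` is an independent dominating set of `G`. -/
def IsIndepDomSet {V : Type*} (G : SimpleGraph V) (S : Finset V) : Prop :=
  (∀ a ∈ S, ∀ b ∈ S, ¬ G.Adj a b) ∧ ∀ v : V, v ∉ S → ∃ u ∈ S, G.Adj u v

/-- The independent domination polynomial `D_i(G, x) = Σ_k d_i(G,k) x^k`. -/
noncomputable def indepDomPoly {V : Type*} (G : SimpleGraph V) : Polynomial ℝ :=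
  ∑ k ∈ Finset.range (Nat.card V + 1),
    Polynomial.C ((Nat.card {S : Finset V // IsIndepDomSet G S ∧ S.card = k}) : ℝ) *
      Polynomial.X ^ k

/-- The independence polynomial `I(G, x) = Σ_k c_k x^k`. -/
noncomputable def indepPoly {V : Type*} (G : SimpleGraph V) : Polynomial ℝ :=
  ∑ k ∈ Finset.range (Nat.card V + 1),
    Polynomial.C ((Nat.card {S : Finset V //
        (∀ a ∈ S, ∀ b ∈ S, ¬ G.Adj a b) ∧ S.card = k}) : ℝ) *
      Polynomial.X ^ k

/-- For a proper divisor `d` of `n`, the set `A_d = {x : gcd(x.val, n) = d}` is an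
independent set of the comaximal graph of cardinality `φ(n/d)`. -/
theorem stmt_1 (n d : ℕ) (hn : 2 ≤ n) (hdvd : d ∣ n) (hd1 : 1 < d) (hdn : d < n) :
    (∀ a ∈ {x : ZMod n | Nat.gcd x.val n = d}, ∀ b ∈ {x : ZMod n | Nat.gcd x.val n = d},
      ¬ (comaximalGraph n).Adj a b) ∧
    Nat.card {x : ZMod n | Nat.gcd x.val n = d} = Nat.totient (n / d) := by
  have hn0 : n ≠ 0 := by omega
  haveI : NeZero n := ⟨hn0⟩
  obtain ⟨p, hp, hpd⟩ := (Nat.exists_prime_and_dvd (by omega : d ≠ 1))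
  haveI : Fact p.Prime := ⟨hp⟩
  have hpn : p ∣ n := hpd.trans hdvd
  constructor
  · rintro a ha b hb ⟨-, hspan⟩
    simp only [Set.mem_setOf_eq] at ha hb
    have h1 : (1 : ZMod n) ∈ Ideal.span ({a, b} : Set (ZMod n)) := hspan ▸ trivial
    obtain ⟨x, y, hxy⟩ := Ideal.mem_span_pair.mp h1
    have key : ∀ c : ZMod n, Nat.gcd c.val n = d → (ZMod.castHom hpn (ZMod p)) c = 0 := by
      intro c hc
      have hpc : p ∣ c.val := hpd.trans (hc ▸ Nat.gcd_dvd_left _ _)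
      have : c = ((c.val : ℕ) : ZMod n) := (ZMod.natCast_rightInverse c).symm
      rw [this, map_natCast]
      exact (ZMod.natCast_eq_zero_iff _ _).mpr hpc
    have := congrArg (ZMod.castHom hpn (ZMod p)) hxy
    rw [map_add, map_mul, map_mul, key a ha, key b hb, mul_zero, mul_zero, add_zero,
      map_one] at this
    exact one_ne_zero this.symm
  · have e : {x : ZMod n | Nat.gcd x.val n = d} ≃
        {k ∈ Finset.range n | n.gcd k = d} := by
      refine ⟨fun x => ⟨x.1.val, ?_⟩, fun k => ⟨((k : ℕ) : ZMod n), ?_⟩, ?_, ?_⟩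
      · simp only [Finset.mem_filter, Finset.mem_range]
        exact ⟨ZMod.val_lt x.1, (Nat.gcd_comm _ _).trans x.2⟩
      · have hk := k.2
        simp only [Finset.mem_filter, Finset.mem_range] at hk
        show Nat.gcd (((k : ℕ) : ZMod n)).val n = d
        rw [ZMod.val_natCast_of_lt hk.1, Nat.gcd_comm]
        exact hk.2
      · intro x; ext; simp [ZMod.natCast_val, ZMod.cast_id]
      · intro k
        have hk := k.2
        simp only [Finset.mem_filter, Finset.mem_range] at hk
        ext; exact ZMod.val_natCast_of_lt hk.1
    rw [Nat.card_congr e, Nat.card_eq_fintype_card, Fintype.card_coe,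
      ← Nat.totient_div_of_dvd hdvd]
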